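/- For every ℓ with 0 < ℓ < 2·arsinh(1) and every s ∈ [−X(ℓ), X(ℓ)], one has ∫_{−X(ℓ)}^{X(ℓ)} e^{−|s − s₀|}·ρ_ℓ(s₀)^{−2} ds₀ ≤ 6·ρ_ℓ(s)^{−2}, where ρ_ℓ(s) = ℓ/(2π·cos(ℓ·s/(2π))) and X(ℓ) = (2π/ℓ)·(π/2 − arctan(sinh(ℓ/2))). -/

import Mathlib

/-- Half-length of the hyperbolic collar around a geodesic of length `ℓ`. -/
noncomputable def collarX (ℓ : ℝ) : ℝ :=
  2 * Real.pi / ℓ * (Real.pi / 2 - Real.arctan (Real.sinh (ℓ / 2)))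

/-- Conformal factor of the hyperbolic collar. -/
noncomputable def collarRho (ℓ s : ℝ) : ℝ :=
  ℓ / (2 * Real.pi * Real.cos (ℓ * s / (2 * Real.pi)))

open Real

/-- `∫_{a}^{s} e^{-|s-t|/3} dt ≤ 3` when `a ≤ s`. -/
private lemma collar_exp_int_left (a s : ℝ) (h : a ≤ s) :
    ∫ t in a..s, Real.exp (-|s - t| / 3) ≤ 3 := by
  have hcongr : Set.EqOn (fun t => Real.exp (-|s - t| / 3))
      (fun t => Real.exp ((t - s) / 3)) (Set.uIcc a s) := by
    intro t ht
    rw [Set.uIcc_of_le h] at ht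
    have : |s - t| = s - t := abs_of_nonneg (by linarith [ht.2])
    simp only [this]
    ring_nf
  rw [intervalIntegral.integral_congr hcongr]
  have hderiv : ∀ t ∈ Set.uIcc a s,
      HasDerivAt (fun u => 3 * Real.exp ((u - s) / 3)) (Real.exp ((t - s) / 3)) t := by
    intro t _
    have h1 : HasDerivAt (fun u : ℝ => (u - s) / 3) (1 / 3) t :=
      ((hasDerivAt_id t).sub_const s).div_const 3
    have h2 := (Real.hasDerivAt_exp ((t - s) / 3)).comp t h1
    have h3 := h2.const_mul 3
    refine h3.congr_deriv ?_
    ring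
  rw [intervalIntegral.integral_eq_sub_of_hasDerivAt hderiv
    ((Real.continuous_exp.comp (by continuity)).intervalIntegrable _ _)]
  have h4 : Real.exp ((s - s) / 3) = 1 := by norm_num
  have h5 := Real.exp_pos ((a - s) / 3)
  rw [h4]
  nlinarith

/-- `∫_{s}^{b} e^{-|s-t|/3} dt ≤ 3` when `s ≤ b`. -/
private lemma collar_exp_int_right (b s : ℝ) (h : s ≤ b) :
    ∫ t in s..b, Real.exp (-|s - t| / 3) ≤ 3 := by
  have hcongr : Set.EqOn (fun t => Real.exp (-|s - t| / 3))
      (fun t => Real.exp ((s - t) / 3)) (Set.uIcc s b) := by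
    intro t ht
    rw [Set.uIcc_of_le h] at ht
    have : |s - t| = -(s - t) := abs_of_nonpos (by linarith [ht.1])
    simp only [this]
    ring_nf
  rw [intervalIntegral.integral_congr hcongr]
  have hderiv : ∀ t ∈ Set.uIcc s b,
      HasDerivAt (fun u => -3 * Real.exp ((s - u) / 3)) (Real.exp ((s - t) / 3)) t := by
    intro t _
    have h1 : HasDerivAt (fun u : ℝ => (s - u) / 3) (-1 / 3) t := by
      have := ((hasDerivAt_id t).const_sub s).div_const 3
      exact this
    have h2 := (Real.hasDerivAt_exp ((s - t) / 3)).comp t h1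
    have h3 := h2.const_mul (-3)
    refine h3.congr_deriv ?_
    ring
  rw [intervalIntegral.integral_eq_sub_of_hasDerivAt hderiv
    ((Real.continuous_exp.comp (by continuity)).intervalIntegrable _ _)]
  have h4 : Real.exp ((s - s) / 3) = 1 := by norm_num
  have h5 := Real.exp_pos ((s - b) / 3)
  rw [h4]
  nlinarith

private lemma collar_sq_exp_bound {ct cs d : ℝ} (hct : 0 ≤ ct)
    (h : ct ≤ cs * Real.exp (d / 3)) :
    Real.exp (-d) * ct ^ 2 ≤ Real.exp (-d / 3) * cs ^ 2 := by
  have h2 : ct ^ 2 ≤ cs ^ 2 * Real.exp (d / 3) ^ 2 := by nlinarith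
  have he : Real.exp (-d) * Real.exp (d / 3) ^ 2 = Real.exp (-d / 3) := by
    rw [sq, ← Real.exp_add, ← Real.exp_add]
    ring_nf
  calc Real.exp (-d) * ct ^ 2 ≤ Real.exp (-d) * (cs ^ 2 * Real.exp (d / 3) ^ 2) :=
        mul_le_mul_of_nonneg_left h2 (Real.exp_pos _).le
    _ = Real.exp (-d / 3) * cs ^ 2 := by rw [← he]; ring

/-- On the collar interval, `cos (ℓ u / 2π)` is at least `tanh (ℓ/2)`, and more generally
the key ratio estimate holds. -/
private lemma collar_cos_facts (ℓ : ℝ) (h0 : 0 < ℓ) :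
    (∀ u : ℝ, |u| ≤ collarX ℓ → Real.tanh (ℓ / 2) ≤ Real.cos (ℓ * u / (2 * π))) ∧
    (∀ s t : ℝ, |s| ≤ collarX ℓ → |t| ≤ collarX ℓ →
      Real.cos (ℓ * t / (2 * π)) ≤ Real.cos (ℓ * s / (2 * π)) * Real.exp (|s - t| / 3)) := by
  have hπ : (0:ℝ) < π := Real.pi_pos
  set A := π / 2 - Real.arctan (Real.sinh (ℓ / 2)) with hA
  clear_value A
  have hsinh_pos : 0 < Real.sinh (ℓ / 2) := Real.sinh_pos_iff.mpr (by linarith)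
  have harctan_pos : 0 < Real.arctan (Real.sinh (ℓ / 2)) := by
    have := Real.arctan_strictMono hsinh_pos
    simpa using this
  have hA0 : 0 < A := by
    have := Real.arctan_lt_pi_div_two (Real.sinh (ℓ / 2))
    simp only [hA]; linarith
  have hA2 : A ≤ π / 2 := by simp only [hA]; linarith
  have hcosh_pos : 0 < Real.cosh (ℓ / 2) := Real.cosh_pos _
  have hsqrt : Real.sqrt (1 + Real.sinh (ℓ / 2) ^ 2) = Real.cosh (ℓ / 2) := by
    rw [show (1:ℝ) + Real.sinh (ℓ / 2) ^ 2 = Real.cosh (ℓ / 2) ^ 2 by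
      rw [Real.cosh_sq]; ring]
    exact Real.sqrt_sq hcosh_pos.le
  have hcosA : Real.cos A = Real.tanh (ℓ / 2) := by
    rw [hA, Real.cos_pi_div_two_sub, Real.sin_arctan, hsqrt, Real.tanh_eq_sinh_div_cosh]
  have hsinA : Real.sin A = 1 / Real.cosh (ℓ / 2) := by
    rw [hA, Real.sin_pi_div_two_sub, Real.cos_arctan, hsqrt]
  have htanh_pos : 0 < Real.tanh (ℓ / 2) := by
    rw [Real.tanh_eq_sinh_div_cosh]; positivity
  -- |u| ≤ X → |ℓ u / 2π| ≤ A
  have habs : ∀ u : ℝ, |u| ≤ collarX ℓ → |ℓ * u / (2 * π)| ≤ A := by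
    intro u hu
    have h1 : |ℓ * u / (2 * π)| = |u| * (ℓ / (2 * π)) := by
      rw [abs_div, abs_mul, abs_of_pos h0, abs_of_pos (by positivity : (0:ℝ) < 2 * π)]
      ring
    rw [h1]
    have h2 : collarX ℓ * (ℓ / (2 * π)) = A := by
      rw [hA]
      unfold collarX
      field_simp
    rw [← h2]
    exact mul_le_mul_of_nonneg_right hu (by positivity)
  -- lower bound for cos
  have hlow : ∀ u : ℝ, |u| ≤ collarX ℓ → Real.tanh (ℓ / 2) ≤ Real.cos (ℓ * u / (2 * π)) := by
    intro u hu
    have h1 := habs u hu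
    have h2 : Real.cos (ℓ * u / (2 * π)) = Real.cos (|ℓ * u / (2 * π)|) := (Real.cos_abs _).symm
    rw [h2, ← hcosA]
    exact Real.cos_le_cos_of_nonneg_of_le_pi (abs_nonneg _) (by linarith) h1
  refine ⟨hlow, ?_⟩
  intro s t hsX htX
  set x := ℓ * s / (2 * π) with hx
  set y := ℓ * t / (2 * π) with hy
  have hxA := habs s hsX
  have hyA := habs t htX
  -- |sin v| ≤ sin A for |v| ≤ A
  have hsinbound : ∀ v : ℝ, |v| ≤ A → |Real.sin v| ≤ Real.sin A := by
    intro v hv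
    have h1 : |Real.sin v| = Real.sin |v| := by
      rcases le_or_gt 0 v with h | h
      · rw [abs_of_nonneg h, abs_of_nonneg]
        exact Real.sin_nonneg_of_nonneg_of_le_pi h (by rw [abs_of_nonneg h] at hv; linarith)
      · rw [abs_of_neg h, Real.sin_neg, abs_of_nonpos]
        have : Real.sin v ≤ 0 := Real.sin_nonpos_of_nonpos_of_neg_pi_le h.le
          (by rw [abs_of_neg h] at hv; linarith)
        linarith
    rw [h1]
    exact Real.sin_le_sin_of_le_of_le_pi_div_two (by linarith [abs_nonneg v]) hA2 hv
  -- Lipschitz-type bound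
  have hcs : Real.tanh (ℓ / 2) ≤ Real.cos x := hlow s hsX
  have hkey : Real.cos y - Real.cos x ≤ Real.sin A * |y - x| := by
    have h1 : Real.cos y - Real.cos x = -2 * Real.sin ((y + x) / 2) * Real.sin ((y - x) / 2) :=
      Real.cos_sub_cos y x
    have h2 : |(y + x) / 2| ≤ A := by
      rw [abs_div]
      have := abs_add_le y x
      have : |y + x| ≤ 2 * A := by linarith [abs_add_le y x]
      rw [abs_of_pos (by norm_num : (0:ℝ) < 2)]
      linarith
    have h3 := hsinbound _ h2
    have h4 : |Real.sin ((y - x) / 2)| ≤ |y - x| / 2 := by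
      calc |Real.sin ((y - x) / 2)| ≤ |(y - x) / 2| := Real.abs_sin_le_abs
        _ = |y - x| / 2 := by rw [abs_div]; norm_num
    have hsinA_pos : 0 ≤ Real.sin A := by
      rw [hsinA]; positivity
    calc Real.cos y - Real.cos x
        ≤ |Real.cos y - Real.cos x| := le_abs_self _
      _ = 2 * |Real.sin ((y + x) / 2)| * |Real.sin ((y - x) / 2)| := by
          rw [h1]; rw [abs_mul, abs_mul]; norm_num
      _ ≤ 2 * Real.sin A * (|y - x| / 2) := by
          apply mul_le_mul (by nlinarith [abs_nonneg (Real.sin ((y + x) / 2))]) h4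
            (abs_nonneg _) (by positivity)
      _ = Real.sin A * |y - x| := by ring
  -- sin A * |y - x| ≤ (|s - t| / 3) * tanh (ℓ/2)
  have hyx : |y - x| = |s - t| * (ℓ / (2 * π)) := by
    rw [hx, hy]
    rw [show ℓ * t / (2 * π) - ℓ * s / (2 * π) = (t - s) * (ℓ / (2 * π)) by ring]
    rw [abs_mul, abs_of_pos (by positivity : (0:ℝ) < ℓ / (2 * π)), abs_sub_comm]
  have hsinh_ge : ℓ / 2 ≤ Real.sinh (ℓ / 2) := Real.self_le_sinh_iff.mpr (by linarith)
  have hpi3 : (3:ℝ) < π := Real.pi_gt_three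
  have hcoef : Real.sin A * (ℓ / (2 * π)) ≤ Real.tanh (ℓ / 2) / 3 := by
    rw [hsinA, Real.tanh_eq_sinh_div_cosh, div_div,
      show (1 : ℝ) / Real.cosh (ℓ / 2) * (ℓ / (2 * π))
        = ℓ / (2 * π * Real.cosh (ℓ / 2)) by ring,
      div_le_div_iff₀ (by positivity) (by positivity)]
    nlinarith [mul_nonneg (mul_nonneg (by positivity : (0:ℝ) ≤ 2 * π) hcosh_pos.le)
        (sub_nonneg.2 hsinh_ge),
      mul_nonneg (mul_pos hcosh_pos h0).le (sub_nonneg.2 hpi3.le)]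
  have hstep : Real.cos y ≤ Real.cos x * (1 + |s - t| / 3) := by
    have h1 : Real.sin A * |y - x| ≤ (Real.tanh (ℓ / 2) / 3) * |s - t| := by
      rw [hyx, show Real.sin A * (|s - t| * (ℓ / (2 * π)))
          = Real.sin A * (ℓ / (2 * π)) * |s - t| by ring]
      exact mul_le_mul_of_nonneg_right hcoef (abs_nonneg _)
    have h2 : (Real.tanh (ℓ / 2) / 3) * |s - t| ≤ (Real.cos x / 3) * |s - t| := by
      apply mul_le_mul_of_nonneg_right _ (abs_nonneg _)
      linarith
    nlinarith [hkey]
  calc Real.cos y ≤ Real.cos x * (1 + |s - t| / 3) := hstep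
    _ ≤ Real.cos x * Real.exp (|s - t| / 3) := by
        apply mul_le_mul_of_nonneg_left _ (by linarith)
        linarith [Real.add_one_le_exp (|s - t| / 3)]

/-- Convolution estimate: `∫_{-X}^{X} e^{-|s-s₀|}·ρ_ℓ(s₀)⁻² ds₀ ≤ 6·ρ_ℓ(s)⁻²`. -/
theorem collarRho_convolution_bound (ℓ : ℝ) (h0 : 0 < ℓ) (h1 : ℓ < 2 * Real.arsinh 1)
    (s : ℝ) (hs : s ∈ Set.Icc (-(collarX ℓ)) (collarX ℓ)) :
    (∫ s₀ in (-(collarX ℓ))..(collarX ℓ),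
        Real.exp (-|s - s₀|) * (collarRho ℓ s₀ ^ 2)⁻¹)
      ≤ 6 * (collarRho ℓ s ^ 2)⁻¹ := by
  have hπ : (0:ℝ) < π := Real.pi_pos
  obtain ⟨hcoslow, hcosratio⟩ := collar_cos_facts ℓ h0
  set X := collarX ℓ with hXdef
  obtain ⟨hs1, hs2⟩ := hs
  have hXnn : 0 ≤ X := by linarith
  have habs_s : |s| ≤ X := abs_le.mpr ⟨by linarith, hs2⟩
  have hrho : ∀ t : ℝ, (collarRho ℓ t ^ 2)⁻¹
      = (2 * π * Real.cos (ℓ * t / (2 * π))) ^ 2 / ℓ ^ 2 := by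
    intro t
    unfold collarRho
    rw [div_pow, inv_div]
  have htanh_pos : 0 < Real.tanh (ℓ / 2) := by
    rw [Real.tanh_eq_sinh_div_cosh]
    have := Real.sinh_pos_iff.mpr (show (0:ℝ) < ℓ / 2 by linarith)
    have := Real.cosh_pos (ℓ / 2)
    positivity
  -- pointwise bound
  have hpt : ∀ t ∈ Set.Icc (-X) X,
      Real.exp (-|s - t|) * (collarRho ℓ t ^ 2)⁻¹
        ≤ Real.exp (-|s - t| / 3) * (collarRho ℓ s ^ 2)⁻¹ := by
    intro t ht
    have htabs : |t| ≤ X := abs_le.mpr ⟨ht.1, ht.2⟩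
    rw [hrho t, hrho s]
    have hratio := hcosratio s t habs_s htabs
    have hct : 0 ≤ Real.cos (ℓ * t / (2 * π)) := le_trans htanh_pos.le (hcoslow t htabs)
    have key := collar_sq_exp_bound (ct := 2 * π * Real.cos (ℓ * t / (2 * π)))
      (cs := 2 * π * Real.cos (ℓ * s / (2 * π))) (d := |s - t|)
      (by positivity)
      (by nlinarith [hratio, Real.exp_pos (|s - t| / 3)])
    calc Real.exp (-|s - t|) * ((2 * π * Real.cos (ℓ * t / (2 * π))) ^ 2 / ℓ ^ 2)
        = (ℓ ^ 2)⁻¹ * (Real.exp (-|s - t|) * (2 * π * Real.cos (ℓ * t / (2 * π))) ^ 2) := by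
          ring
      _ ≤ (ℓ ^ 2)⁻¹ * (Real.exp (-|s - t| / 3) * (2 * π * Real.cos (ℓ * s / (2 * π))) ^ 2) :=
          mul_le_mul_of_nonneg_left key (by positivity)
      _ = Real.exp (-|s - t| / 3) * ((2 * π * Real.cos (ℓ * s / (2 * π))) ^ 2 / ℓ ^ 2) := by
          ring
  -- integrability
  have hcont1 : Continuous fun t => Real.exp (-|s - t|)
      * ((2 * π * Real.cos (ℓ * t / (2 * π))) ^ 2 / ℓ ^ 2) := by
    apply Continuous.mul
    · exact Real.continuous_exp.comp (by continuity)
    · apply Continuous.div_const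
      apply Continuous.pow
      exact continuous_const.mul (Real.continuous_cos.comp (by continuity))
  have hcont2 : Continuous fun t : ℝ => Real.exp (-|s - t| / 3) := by
    exact Real.continuous_exp.comp (by continuity)
  have hint1 : IntervalIntegrable
      (fun t => Real.exp (-|s - t|) * (collarRho ℓ t ^ 2)⁻¹) MeasureTheory.volume (-X) X := by
    have : (fun t => Real.exp (-|s - t|) * (collarRho ℓ t ^ 2)⁻¹)
        = fun t => Real.exp (-|s - t|) * ((2 * π * Real.cos (ℓ * t / (2 * π))) ^ 2 / ℓ ^ 2) := by
      funext t; rw [hrho t]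
    rw [this]
    exact hcont1.intervalIntegrable _ _
  have hint2 : IntervalIntegrable
      (fun t => Real.exp (-|s - t| / 3) * (collarRho ℓ s ^ 2)⁻¹) MeasureTheory.volume (-X) X :=
    (hcont2.mul continuous_const).intervalIntegrable _ _
  -- monotonicity step
  have hmono := intervalIntegral.integral_mono_on (by linarith : -X ≤ X) hint1 hint2 hpt
  -- pull constant
  have hpull : (∫ t in (-X)..X, Real.exp (-|s - t| / 3) * (collarRho ℓ s ^ 2)⁻¹)
      = (∫ t in (-X)..X, Real.exp (-|s - t| / 3)) * (collarRho ℓ s ^ 2)⁻¹ :=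
    intervalIntegral.integral_mul_const _ _
  -- exponential integral bound
  have hsplit : (∫ t in (-X)..X, Real.exp (-|s - t| / 3))
      = (∫ t in (-X)..s, Real.exp (-|s - t| / 3))
        + ∫ t in s..X, Real.exp (-|s - t| / 3) := by
    rw [intervalIntegral.integral_add_adjacent_intervals
      (hcont2.intervalIntegrable _ _) (hcont2.intervalIntegrable _ _)]
  have hexp6 : (∫ t in (-X)..X, Real.exp (-|s - t| / 3)) ≤ 6 := by
    rw [hsplit]
    have hL := collar_exp_int_left (-X) s (by linarith)
    have hR := collar_exp_int_right X s hs2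
    linarith
  have hK : 0 ≤ (collarRho ℓ s ^ 2)⁻¹ := by positivity
  calc (∫ t in (-X)..X, Real.exp (-|s - t|) * (collarRho ℓ t ^ 2)⁻¹)
      ≤ ∫ t in (-X)..X, Real.exp (-|s - t| / 3) * (collarRho ℓ s ^ 2)⁻¹ := hmono
    _ = (∫ t in (-X)..X, Real.exp (-|s - t| / 3)) * (collarRho ℓ s ^ 2)⁻¹ := hpull
    _ ≤ 6 * (collarRho ℓ s ^ 2)⁻¹ := mul_le_mul_of_nonneg_right hexp6 hK
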